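/- If G is an ambiguous k-molecule with two distinct bases A_k and B_k, then A_k ∪ B_k = V(G). -/

import Mathlib

open SimpleGraph

/-- `G` is `m`-connected in the sense of Menger: any two distinct vertices are
joined by `m` pairwise distinct, internally disjoint paths. -/
def MengerConnected {V : Type*} (m : ℕ) (G : SimpleGraph V) : Prop :=
  ∀ u v : V, u ≠ v → ∃ P : Fin m → G.Path u v, Function.Injective P ∧
    ∀ i j, i ≠ j → ∀ x, x ∈ (P i).1.support → x ∈ (P j).1.support → x = u ∨ x = v

/-- The connectivity of a graph: the largest `m` for which it is `m`-connected.
(With this definition the connectivity of the `k`-clique is `k-1`, as in the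
paper's convention.) -/
noncomputable def connectivity {V : Type*} (G : SimpleGraph V) : ℕ :=
  sSup {m | MengerConnected m G}

/-- The `k`-molecule `ϑ_{B_k}^{Bs,h}`: its vertices are a base `B_k` of `k`
vertices (the `Sum.inl` vertices) carrying the internal edge set `Bs`, together
with `h` further vertices `v₁, …, v_h` (the `Sum.inr` vertices), each adjacent
to every base vertex and to no other non-base vertex. -/
def molecule (k h : ℕ) (Bs : SimpleGraph (Fin k)) : SimpleGraph (Fin k ⊕ Fin h) where
  Adj x y :=
    match x, y with
    | Sum.inl a, Sum.inl b => Bs.Adj a b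
    | Sum.inl _, Sum.inr _ => True
    | Sum.inr _, Sum.inl _ => True
    | Sum.inr _, Sum.inr _ => False
  symm := ⟨by rintro (a | a) (b | b) hab <;> first | exact hab.symm | trivial⟩
  loopless := ⟨by rintro (a | a) hab <;> first | exact Bs.loopless a hab | exact Bs.irrefl hab | exact hab⟩

/-- `(G, A)` is a `k`-premolecule: `G` is isomorphic to a `k`-molecule via an
isomorphism sending `A` to the base. -/
def IsPremolecule {V : Type*} (k : ℕ) (G : SimpleGraph V) (A : Set V) : Prop :=
  ∃ (h : ℕ) (Bs : SimpleGraph (Fin k)) (e : G ≃g molecule k h Bs),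
    1 ≤ h ∧ k - connectivity Bs ≤ h ∧
    ∀ a : V, a ∈ A ↔ ∃ i : Fin k, e a = Sum.inl i


lemma prem_adj {V : Type*} {k : ℕ} {G : SimpleGraph V} {A : Set V}
    (hA : IsPremolecule k G A) {a v : V} (ha : a ∈ A) (hv : v ∉ A) : G.Adj a v := by
  obtain ⟨h, Bs, e, -, -, hmem⟩ := hA
  obtain ⟨i, hi⟩ := (hmem a).1 ha
  have hv' : ¬ ∃ i : Fin k, e v = Sum.inl i := fun hh => hv ((hmem v).2 hh)
  rcases hev : e v with j | j
  · exact absurd ⟨j, hev⟩ hv'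
  · have : (molecule k h Bs).Adj (e a) (e v) := by rw [hi, hev]; trivial
    exact e.map_adj_iff.mp this

lemma prem_not_adj {V : Type*} {k : ℕ} {G : SimpleGraph V} {A : Set V}
    (hA : IsPremolecule k G A) {a v : V} (ha : a ∉ A) (hv : v ∉ A) : ¬ G.Adj a v := by
  obtain ⟨h, Bs, e, -, -, hmem⟩ := hA
  rcases hea : e a with i | i
  · exact absurd ((hmem a).2 ⟨i, hea⟩) ha
  · rcases hev : e v with j | j
    · exact absurd ((hmem v).2 ⟨j, hev⟩) hv
    · intro hadj
      have : (molecule k h Bs).Adj (e a) (e v) := e.map_adj_iff.mpr hadj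
      rw [hea, hev] at this
      exact this

/-- if `G` is an ambiguous `k`-molecule, i.e. it has two distinct
bases `A` and `B`, then `A ∪ B = V(G)`. -/
theorem ambiguous_molecule_bases_cover {V : Type*} [Fintype V] (k : ℕ)
    (G : SimpleGraph V) (A B : Set V) (hAB : A ≠ B)
    (hA : IsPremolecule k G A) (hB : IsPremolecule k G B) :
    A ∪ B = Set.univ := by
  ext v
  simp only [Set.mem_union, Set.mem_univ, iff_true]
  by_contra hv
  push_neg at hv
  obtain ⟨hvA, hvB⟩ := hv
  have hx : ∃ x, (x ∈ A ∧ x ∉ B) ∨ (x ∈ B ∧ x ∉ A) := by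
    by_contra hc
    push_neg at hc
    exact hAB (Set.ext fun x => ⟨(hc x).1, (hc x).2⟩)
  obtain ⟨x, ⟨hxA, hxB⟩ | ⟨hxB, hxA⟩⟩ := hx
  · exact prem_not_adj hB hxB hvB (prem_adj hA hxA hvA)
  · exact prem_not_adj hA hxA hvA (prem_adj hB hxB hvB)
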